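/- Let a, b, c ≥ 3 be integers and let p be an odd prime. If the ternary quadratic form Q(X,Y,Z) = (a−2)X² + (b−2)Y² + (c−2)Z² is anisotropic over ℚ_p (i.e., Q(v) = 0 with v ∈ ℚ_p³ implies v = 0), then there exists a constant C ∈ ℕ such that for every n ∈ ℕ the p-adic valuation of l_n + v_{a,b,c} is at most C. -/

import Mathlib

open Polynomial

section
variable {p : ℕ} [hp : Fact p.Prime]

lemma my_two_not_dvd {p : ℕ} [hp : Fact p.Prime] (hodd : Odd p) : ¬ ((p:ℤ) ∣ 2) := by
  intro h
  have h2 : p ∣ 2 := by exact_mod_cast h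
  have := (Nat.prime_dvd_prime_iff_eq hp.out Nat.prime_two).mp h2
  subst this
  simp [Nat.odd_iff] at hodd

lemma my_norm_two {p : ℕ} [hp : Fact p.Prime] (hodd : Odd p) : ‖(2 : ℤ_[p])‖ = 1 := by
  have h : ¬ ‖((2:ℤ) : ℤ_[p])‖ < 1 := by
    rw [PadicInt.norm_int_lt_one_iff_dvd]
    exact my_two_not_dvd hodd
  have h2 : ((2:ℤ) : ℤ_[p]) = (2 : ℤ_[p]) := by norm_cast
  rw [h2] at h
  exact ((PadicInt.norm_le_one _).lt_or_eq).resolve_left h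

lemma my_sqrt {p : ℕ} [hp : Fact p.Prime] (hodd : Odd p) (y b : ℤ_[p])
    (hy : ‖y‖ = 1) (hb : ‖b - y ^ 2‖ < 1) : ∃ z : ℤ_[p], z ^ 2 = b := by
  set F : Polynomial ℤ_[p] := X ^ 2 - C b with hF
  have heval : ∀ w : ℤ_[p], F.eval w = w ^ 2 - b := by intro w; simp [hF]
  have hde : ∀ w : ℤ_[p], F.derivative.eval w = 2 * w := by
    intro w
    simp [hF]; left; exact one_add_one_eq_two
  have hnorm : ‖F.eval y‖ < ‖F.derivative.eval y‖ ^ 2 := by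
    rw [heval, hde, norm_mul, my_norm_two hodd, hy]
    rw [show y ^ 2 - b = -(b - y^2) by ring, norm_neg]
    simpa using hb
  obtain ⟨z, hz, -⟩ := hensels_lemma hnorm
  refine ⟨z, ?_⟩
  have h0 := heval z
  rw [show F.eval z = 0 by simpa using hz] at h0
  exact sub_eq_zero.mp h0.symm

lemma my_toZMod_zero_iff (x : ℤ_[p]) : PadicInt.toZMod x = 0 ↔ ‖x‖ < 1 := by
  rw [← RingHom.mem_ker, PadicInt.ker_toZMod, IsLocalRing.mem_maximalIdeal,
    mem_nonunits_iff, PadicInt.not_isUnit_iff]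

lemma my_ternary (hodd : Odd p) (u v t : ℤ_[p])
    (hu : ‖u‖ = 1) (hv : ‖v‖ = 1) (ht : ‖t‖ = 1)
    (hsqrt : ∀ y b : ℤ_[p], ‖y‖ = 1 → ‖b - y ^ 2‖ < 1 → ∃ z : ℤ_[p], z ^ 2 = b) :
    ∃ x y : ℤ_[p], u * x ^ 2 + v * y ^ 2 + t = 0 := by
  -- solve mod p
  set u0 := PadicInt.toZMod u with hu0
  set v0 := PadicInt.toZMod v with hv0
  set t0 := PadicInt.toZMod t with ht0
  have hu0ne : u0 ≠ 0 := by rw [hu0, Ne, my_toZMod_zero_iff, hu]; simp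
  have hv0ne : v0 ≠ 0 := by rw [hv0, Ne, my_toZMod_zero_iff, hv]; simp
  have hcard : Fintype.card (ZMod p) % 2 = 1 := by
    rw [ZMod.card]
    exact Nat.odd_iff.mp hodd
  obtain ⟨r, s, hrs⟩ := FiniteField.exists_root_sum_quadratic
    (f := C u0 * X ^ 2 + C 0 * X + C t0) (g := C v0 * X ^ 2 + C 0 * X + C 0)
    (degree_quadratic hu0ne) (degree_quadratic hv0ne) hcard
  simp only [eval_add, eval_mul, eval_pow, eval_C, eval_X, map_zero, zero_mul, add_zero] at hrs
  -- lift to ℤ_[p]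
  set x0 : ℤ_[p] := (r.val : ℤ_[p]) with hx0
  set y0 : ℤ_[p] := (s.val : ℤ_[p]) with hy0
  have hx0m : PadicInt.toZMod x0 = r := by
    rw [hx0, map_natCast]
    exact ZMod.natCast_rightInverse r
  have hy0m : PadicInt.toZMod y0 = s := by
    rw [hy0, map_natCast]
    exact ZMod.natCast_rightInverse s
  set E : ℤ_[p] := u * x0 ^ 2 + v * y0 ^ 2 + t with hE
  have hEnorm : ‖E‖ < 1 := by
    rw [← my_toZMod_zero_iff]
    simp only [hE, map_add, map_mul, map_pow, hx0m, hy0m]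
    rw [← hu0, ← hv0, ← ht0]
    linear_combination hrs
  have hx0le : ‖x0‖ ≤ 1 := PadicInt.norm_le_one _
  rcases hx0le.lt_or_eq with hxlt | hxeq
  · -- x0 ≡ 0 : use y variable
    have hvy : ‖v * y0 ^ 2 + t‖ < 1 := by
      have : v * y0 ^ 2 + t = E - u * x0 ^ 2 := by rw [hE]; ring
      rw [this]
      have h1 : ‖u * x0 ^ 2‖ < 1 := by
        rw [norm_mul, norm_pow, hu, one_mul]
        exact pow_lt_one₀ (norm_nonneg _) hxlt (by norm_num)
      calc ‖E - u * x0 ^ 2‖ = ‖E + (-(u * x0 ^ 2))‖ := by ring_nf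
        _ ≤ max ‖E‖ ‖-(u * x0 ^ 2)‖ := PadicInt.nonarchimedean _ _
        _ < 1 := by rw [norm_neg]; exact max_lt hEnorm h1
    have hy0n : ‖y0‖ = 1 := by
      by_contra hne
      have hy0lt : ‖y0‖ < 1 := ((PadicInt.norm_le_one _).lt_or_eq).resolve_right hne
      have h2 : ‖v * y0 ^ 2‖ < 1 := by
        rw [norm_mul, norm_pow, hv, one_mul]
        exact pow_lt_one₀ (norm_nonneg _) hy0lt (by norm_num)
      have : ‖t‖ < 1 := by
        have ht' : t = (v * y0 ^ 2 + t) + (-(v * y0 ^ 2)) := by ring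
        calc ‖t‖ = ‖(v * y0 ^ 2 + t) + (-(v * y0 ^ 2))‖ := by rw [← ht']
          _ ≤ max ‖v * y0 ^ 2 + t‖ ‖-(v * y0 ^ 2)‖ := PadicInt.nonarchimedean _ _
          _ < 1 := by rw [norm_neg]; exact max_lt hvy h2
      rw [ht] at this; norm_num at this
    obtain ⟨vv, hvv⟩ := PadicInt.isUnit_iff.mpr hv
    have hb : ‖y0 ^ 2 - (vv⁻¹ : ℤ_[p]ˣ) * (v * y0 ^ 2 + t) - y0 ^ 2‖ < 1 := by
      have : y0 ^ 2 - (vv⁻¹ : ℤ_[p]ˣ) * (v * y0 ^ 2 + t) - y0 ^ 2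
          = -((vv⁻¹ : ℤ_[p]ˣ) * (v * y0 ^ 2 + t)) := by ring
      rw [this, norm_neg, norm_mul, PadicInt.norm_units, one_mul]
      exact hvy
    obtain ⟨z, hz⟩ := hsqrt y0 _ hy0n hb
    refine ⟨0, z, ?_⟩
    have hvz : v * z ^ 2 = v * y0 ^ 2 - v * ((vv⁻¹ : ℤ_[p]ˣ) * (v * y0 ^ 2 + t)) := by
      rw [hz]; ring
    have hvvinv : v * (vv⁻¹ : ℤ_[p]ˣ) = 1 := by
      rw [← hvv]; exact_mod_cast vv.mul_inv
    calc u * 0 ^ 2 + v * z ^ 2 + t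
        = v * z ^ 2 + t := by ring
      _ = v * y0 ^ 2 - (v * (vv⁻¹ : ℤ_[p]ˣ)) * (v * y0 ^ 2 + t) + t := by rw [hvz]; ring
      _ = 0 := by rw [hvvinv]; ring
  · -- ‖x0‖ = 1 : use x variable
    obtain ⟨uu, huu⟩ := PadicInt.isUnit_iff.mpr hu
    have hb : ‖x0 ^ 2 - (uu⁻¹ : ℤ_[p]ˣ) * E - x0 ^ 2‖ < 1 := by
      have : x0 ^ 2 - (uu⁻¹ : ℤ_[p]ˣ) * E - x0 ^ 2 = -((uu⁻¹ : ℤ_[p]ˣ) * E) := by ring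
      rw [this, norm_neg, norm_mul, PadicInt.norm_units, one_mul]
      exact hEnorm
    obtain ⟨z, hz⟩ := hsqrt x0 _ hxeq hb
    refine ⟨z, y0, ?_⟩
    have huuinv : u * (uu⁻¹ : ℤ_[p]ˣ) = 1 := by
      rw [← huu]; exact_mod_cast uu.mul_inv
    have huz : u * z ^ 2 = u * x0 ^ 2 - (u * (uu⁻¹ : ℤ_[p]ˣ)) * E := by
      rw [hz]; ring
    calc u * z ^ 2 + v * y0 ^ 2 + t
        = (u * x0 ^ 2 - (u * (uu⁻¹ : ℤ_[p]ˣ)) * E) + v * y0 ^ 2 + t := by rw [huz]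
      _ = (u * x0 ^ 2 + v * y0 ^ 2 + t) - E := by rw [huuinv, hE]; ring
      _ = 0 := by rw [← hE]; ring

lemma my_decomp (a : ℤ) (ha : a ≠ 0) :
    ∃ a' : ℤ, a = (p : ℤ) ^ (padicValInt p a) * a' ∧ ¬ (p : ℤ) ∣ a' := by
  obtain ⟨a', ha'⟩ := padicValInt_dvd (p := p) a
  refine ⟨a', ha', fun hdvd => ?_⟩
  obtain ⟨a'', ha''⟩ := hdvd
  have : (p : ℤ) ^ (padicValInt p a + 1) ∣ a := by
    refine ⟨a'', ?_⟩
    calc a = (p : ℤ) ^ (padicValInt p a) * ((p : ℤ) * a'') := by rw [← ha'']; exact ha'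
      _ = (p : ℤ) ^ (padicValInt p a + 1) * a'' := by ring
  rcases (padicValInt_dvd_iff _ _).mp this with h | h
  · exact ha h
  · omega

lemma my_norm_one_of_not_dvd {a : ℤ} (h : ¬ (p : ℤ) ∣ a) : ‖(a : ℤ_[p])‖ = 1 :=
  ((PadicInt.norm_le_one _).lt_or_eq).resolve_left
    (fun hlt => h ((PadicInt.norm_int_lt_one_iff_dvd a).mp hlt))

lemma my_keyK (hodd : Odd p) (α β γ : ℤ) (hα : α ≠ 0) (hβ : β ≠ 0) (hγ : γ ≠ 0)
    (haniso : ∀ X Y Z : ℚ_[p], (α : ℚ_[p]) * X ^ 2 + (β : ℚ_[p]) * Y ^ 2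
      + (γ : ℚ_[p]) * Z ^ 2 = 0 → X = 0 ∧ Y = 0 ∧ Z = 0)
    (hsqrt : ∀ y b : ℤ_[p], ‖y‖ = 1 → ‖b - y ^ 2‖ < 1 → ∃ z : ℤ_[p], z ^ 2 = b)
    (hternary : ∀ u v t : ℤ_[p], ‖u‖ = 1 → ‖v‖ = 1 → ‖t‖ = 1 →
      ∃ x y : ℤ_[p], u * x ^ 2 + v * y ^ 2 + t = 0)
    (h12 : padicValInt p α ≤ padicValInt p β)
    (h23 : padicValInt p β ≤ padicValInt p γ) :
    ¬ (p : ℤ) ^ (padicValInt p α + padicValInt p β + padicValInt p γ)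
      ∣ (α * β + β * γ + γ * α) := by
  intro hdvd
  set e1 := padicValInt p α with he1
  set e2 := padicValInt p β with he2
  set e3 := padicValInt p γ with he3
  have hprime : Prime (p : ℤ) := Nat.prime_iff_prime_int.mp hp.out
  have hppos : (0:ℤ) < (p:ℤ) := by exact_mod_cast hp.out.pos
  rcases show e2 < e3 ∨ (e1 = e2 ∧ e2 = e3) ∨ (e1 < e2 ∧ e2 = e3) by omega with h | ⟨h1, h2⟩ | ⟨h1, h2⟩
  · -- case e2 < e3
    have dαβ : (p : ℤ) ^ e1 ∣ α + β :=
      dvd_add (padicValInt_dvd α) ((pow_dvd_pow _ h12).trans (padicValInt_dvd β))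
    have d1 : (p : ℤ) ^ (e1 + e2 + 1) ∣ γ * (α + β) := by
      refine (pow_dvd_pow _ (show e1 + e2 + 1 ≤ e3 + e1 by omega)).trans ?_
      rw [pow_add]
      exact mul_dvd_mul (padicValInt_dvd γ) dαβ
    have d2 : (p : ℤ) ^ (e1 + e2 + 1) ∣ α * β := by
      have hs : (p : ℤ) ^ (e1 + e2 + 1) ∣ α * β + γ * (α + β) := by
        refine (pow_dvd_pow _ (show e1 + e2 + 1 ≤ e1 + e2 + e3 by omega)).trans ?_
        rw [show α * β + γ * (α + β) = α * β + β * γ + γ * α by ring]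
        exact hdvd
      have := dvd_sub hs d1
      simpa using this
    rcases (padicValInt_dvd_iff _ _).mp d2 with h0 | h0
    · exact (mul_ne_zero hα hβ) h0
    · rw [padicValInt.mul hα hβ, ← he1, ← he2] at h0
      omega
  · -- case e1 = e2 = e3 : units case
    obtain ⟨α', hαe, hα'⟩ := my_decomp (p := p) α hα
    obtain ⟨β', hβe, hβ'⟩ := my_decomp (p := p) β hβ
    obtain ⟨γ', hγe, hγ'⟩ := my_decomp (p := p) γ hγ
    obtain ⟨x, y, hxy⟩ := hternary (α' : ℤ_[p]) (β' : ℤ_[p]) (γ' : ℤ_[p])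
      (my_norm_one_of_not_dvd hα') (my_norm_one_of_not_dvd hβ') (my_norm_one_of_not_dvd hγ')
    have hαQ : (α : ℚ_[p]) = (p : ℚ_[p]) ^ e1 * (α' : ℚ_[p]) := by
      rw [← he1] at hαe; exact_mod_cast congrArg (Int.cast : ℤ → ℚ_[p]) hαe
    have hβQ : (β : ℚ_[p]) = (p : ℚ_[p]) ^ e1 * (β' : ℚ_[p]) := by
      rw [← he2, ← h1] at hβe; exact_mod_cast congrArg (Int.cast : ℤ → ℚ_[p]) hβe
    have hγQ : (γ : ℚ_[p]) = (p : ℚ_[p]) ^ e1 * (γ' : ℚ_[p]) := by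
      rw [← he3, ← h2, ← h1] at hγe; exact_mod_cast congrArg (Int.cast : ℤ → ℚ_[p]) hγe
    have hQ : ((α' : ℤ_[p]) : ℚ_[p]) * ((x : ℚ_[p])) ^ 2 + ((β' : ℤ_[p]) : ℚ_[p]) * ((y : ℚ_[p])) ^ 2
        + ((γ' : ℤ_[p]) : ℚ_[p]) = 0 := by
      have := congrArg (fun w : ℤ_[p] => (w : ℚ_[p])) hxy
      push_cast at this
      convert this using 2 <;> norm_cast
    have h0 : (α : ℚ_[p]) * (x : ℚ_[p]) ^ 2 + (β : ℚ_[p]) * (y : ℚ_[p]) ^ 2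
        + (γ : ℚ_[p]) * (1 : ℚ_[p]) ^ 2 = 0 := by
      rw [hαQ, hβQ, hγQ]
      rw [show ((α' : ℤ_[p]) : ℚ_[p]) = (α' : ℚ_[p]) from PadicInt.coe_intCast α',
        show ((β' : ℤ_[p]) : ℚ_[p]) = (β' : ℚ_[p]) from PadicInt.coe_intCast β',
        show ((γ' : ℤ_[p]) : ℚ_[p]) = (γ' : ℚ_[p]) from PadicInt.coe_intCast γ'] at hQ
      linear_combination (p : ℚ_[p]) ^ e1 * hQ
    have := (haniso _ _ _ h0).2.2
    norm_num at this
  · -- case e1 < e2 = e3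
    obtain ⟨α', hαe, hα'⟩ := my_decomp (p := p) α hα
    obtain ⟨β', hβe, hβ'⟩ := my_decomp (p := p) β hβ
    obtain ⟨γ', hγe, hγ'⟩ := my_decomp (p := p) γ hγ
    rw [← he1] at hαe; rw [← he2] at hβe; rw [← he3, ← h2] at hγe
    -- p^(2 e2) ∣ α * (β + γ)
    have dβγ : (p : ℤ) ^ (2 * e2) ∣ β * γ := by
      rw [two_mul, pow_add, hβe, hγe]
      exact mul_dvd_mul ⟨β', by ring⟩ ⟨γ', by ring⟩
    have ds : (p : ℤ) ^ (2 * e2) ∣ β * γ + α * (β + γ) := by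
      refine (pow_dvd_pow _ (show 2 * e2 ≤ e1 + e2 + e3 by omega)).trans ?_
      rw [show β * γ + α * (β + γ) = α * β + β * γ + γ * α by ring]
      exact hdvd
    have dα : (p : ℤ) ^ (2 * e2) ∣ α * (β + γ) := by
      have := dvd_sub ds dβγ
      simpa using this
    have dα2 : (p : ℤ) ^ (2 * e2) ∣ ((p : ℤ) ^ e1 * (α' * (β + γ))) := by
      rw [hαe] at dα
      convert dα using 1; ring
    have dα3 : (p : ℤ) ^ (2 * e2 - e1) ∣ α' * (β + γ) := by
      have h' : (p : ℤ) ^ e1 * (p : ℤ) ^ (2 * e2 - e1) ∣ (p : ℤ) ^ e1 * (α' * (β + γ)) := by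
        rw [← pow_add, show e1 + (2 * e2 - e1) = 2 * e2 by omega]
        exact dα2
      exact (mul_dvd_mul_iff_left (pow_ne_zero e1 (by positivity))).mp h'
    have dβγ2 : (p : ℤ) ^ (2 * e2 - e1) ∣ β + γ :=
      hprime.pow_dvd_of_dvd_mul_left _ hα' dα3
    have dfin : (p : ℤ) ∣ β' + γ' := by
      have h' : (p : ℤ) ^ e2 * (p : ℤ) ∣ (p : ℤ) ^ e2 * (β' + γ') := by
        calc (p : ℤ) ^ e2 * (p : ℤ) = (p : ℤ) ^ (e2 + 1) := by rw [pow_succ]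
          _ ∣ (p : ℤ) ^ (2 * e2 - e1) := pow_dvd_pow _ (by omega)
          _ ∣ β + γ := dβγ2
          _ = (p : ℤ) ^ e2 * (β' + γ') := by rw [hβe, hγe]; ring
      exact (mul_dvd_mul_iff_left (pow_ne_zero e2 (by positivity))).mp h'
    -- construct isotropic vector (0, 1, z)
    obtain ⟨w, hw⟩ := PadicInt.isUnit_iff.mpr (my_norm_one_of_not_dvd hγ')
    have hb : ‖-(β' : ℤ_[p]) * (w⁻¹ : ℤ_[p]ˣ) - (1 : ℤ_[p]) ^ 2‖ < 1 := by
      have heq : -(β' : ℤ_[p]) * (w⁻¹ : ℤ_[p]ˣ) - (1 : ℤ_[p]) ^ 2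
          = -(((β' : ℤ_[p]) + (γ' : ℤ_[p])) * (w⁻¹ : ℤ_[p]ˣ)) := by
        have : (γ' : ℤ_[p]) * (w⁻¹ : ℤ_[p]ˣ) = 1 := by
          rw [← hw]; exact_mod_cast w.mul_inv
        linear_combination this
      rw [heq, norm_neg, norm_mul, PadicInt.norm_units, mul_one]
      rw [show ((β' : ℤ_[p]) + (γ' : ℤ_[p])) = ((β' + γ' : ℤ) : ℤ_[p]) by push_cast; ring]
      rw [PadicInt.norm_int_lt_one_iff_dvd]
      exact dfin
    obtain ⟨z, hz⟩ := hsqrt 1 _ (by simp) hb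
    have hzeq : (β' : ℤ_[p]) + (γ' : ℤ_[p]) * z ^ 2 = 0 := by
      rw [hz]
      have : (γ' : ℤ_[p]) * (w⁻¹ : ℤ_[p]ˣ) = 1 := by
        rw [← hw]; exact_mod_cast w.mul_inv
      linear_combination -(β' : ℤ_[p]) * this
    have hβQ : (β : ℚ_[p]) = (p : ℚ_[p]) ^ e2 * (β' : ℚ_[p]) :=
      by exact_mod_cast congrArg (Int.cast : ℤ → ℚ_[p]) hβe
    have hγQ : (γ : ℚ_[p]) = (p : ℚ_[p]) ^ e2 * (γ' : ℚ_[p]) :=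
      by exact_mod_cast congrArg (Int.cast : ℤ → ℚ_[p]) hγe
    have hQ : (β' : ℚ_[p]) + (γ' : ℚ_[p]) * ((z : ℚ_[p])) ^ 2 = 0 := by
      have := congrArg (fun w : ℤ_[p] => (w : ℚ_[p])) hzeq
      push_cast at this
      convert this using 2 <;> norm_cast
    have h0 : (α : ℚ_[p]) * (0 : ℚ_[p]) ^ 2 + (β : ℚ_[p]) * (1 : ℚ_[p]) ^ 2
        + (γ : ℚ_[p]) * (z : ℚ_[p]) ^ 2 = 0 := by
      rw [hβQ, hγQ]
      linear_combination (p : ℚ_[p]) ^ e2 * hQ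
    have := (haniso _ _ _ h0).2.1
    norm_num at this

lemma my_key (hodd : Odd p) (α β γ : ℤ) (hα : α ≠ 0) (hβ : β ≠ 0) (hγ : γ ≠ 0)
    (haniso : ∀ X Y Z : ℚ_[p], (α : ℚ_[p]) * X ^ 2 + (β : ℚ_[p]) * Y ^ 2
      + (γ : ℚ_[p]) * Z ^ 2 = 0 → X = 0 ∧ Y = 0 ∧ Z = 0) :
    ¬ (p : ℤ) ^ (padicValInt p α + padicValInt p β + padicValInt p γ)
      ∣ (α * β + β * γ + γ * α) := by
  have hsq := my_sqrt hodd
  have htern := fun u v t hu hv ht => my_ternary hodd u v t hu hv ht (my_sqrt hodd)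
  intro hdvd
  rcases le_total (padicValInt p α) (padicValInt p β) with hab | hab <;>
    rcases le_total (padicValInt p β) (padicValInt p γ) with hbc | hbc <;>
    rcases le_total (padicValInt p α) (padicValInt p γ) with hac | hac
  · exact my_keyK hodd α β γ hα hβ hγ haniso hsq htern hab hbc hdvd
  · exact my_keyK hodd α β γ hα hβ hγ haniso hsq htern hab hbc hdvd
  · exact my_keyK hodd α γ β hα hγ hβ
      (fun X Y Z h => (fun r => ⟨r.1, r.2.2, r.2.1⟩) (haniso X Z Y (by linear_combination h)))
      hsq htern hac hbc
      (by rw [show padicValInt p α + padicValInt p γ + padicValInt p β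
            = padicValInt p α + padicValInt p β + padicValInt p γ from by omega,
          show α * γ + γ * β + β * α = α * β + β * γ + γ * α from by ring]; exact hdvd)
  · exact my_keyK hodd γ α β hγ hα hβ
      (fun X Y Z h => (fun r => ⟨r.2.2, r.1, r.2.1⟩) (haniso Y Z X (by linear_combination h)))
      hsq htern hac hab
      (by rw [show padicValInt p γ + padicValInt p α + padicValInt p β
            = padicValInt p α + padicValInt p β + padicValInt p γ from by omega,
          show γ * α + α * β + β * γ = α * β + β * γ + γ * α from by ring]; exact hdvd)
  · exact my_keyK hodd β α γ hβ hα hγ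
      (fun X Y Z h => (fun r => ⟨r.2.1, r.1, r.2.2⟩) (haniso Y X Z (by linear_combination h)))
      hsq htern hab hac
      (by rw [show padicValInt p β + padicValInt p α + padicValInt p γ
            = padicValInt p α + padicValInt p β + padicValInt p γ from by omega,
          show β * α + α * γ + γ * β = α * β + β * γ + γ * α from by ring]; exact hdvd)
  · exact my_keyK hodd β γ α hβ hγ hα
      (fun X Y Z h => (fun r => ⟨r.2.1, r.2.2, r.1⟩) (haniso Z X Y (by linear_combination h)))
      hsq htern hbc hac
      (by rw [show padicValInt p β + padicValInt p γ + padicValInt p α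
            = padicValInt p α + padicValInt p β + padicValInt p γ from by omega,
          show β * γ + γ * α + α * β = α * β + β * γ + γ * α from by ring]; exact hdvd)
  · exact my_keyK hodd γ β α hγ hβ hα
      (fun X Y Z h => (fun r => ⟨r.2.2, r.2.1, r.1⟩) (haniso Z Y X (by linear_combination h)))
      hsq htern hbc hab
      (by rw [show padicValInt p γ + padicValInt p β + padicValInt p α
            = padicValInt p α + padicValInt p β + padicValInt p γ from by omega,
          show γ * β + β * α + α * γ = α * β + β * γ + γ * α from by ring]; exact hdvd)
  · exact my_keyK hodd γ β α hγ hβ hα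
      (fun X Y Z h => (fun r => ⟨r.2.2, r.2.1, r.1⟩) (haniso Z Y X (by linear_combination h)))
      hsq htern hbc hab
      (by rw [show padicValInt p γ + padicValInt p β + padicValInt p α
            = padicValInt p α + padicValInt p β + padicValInt p γ from by omega,
          show γ * β + β * α + α * γ = α * β + β * γ + γ * α from by ring]; exact hdvd)

end

theorem stmt15 (a b c : ℤ) (ha : 3 ≤ a) (hb : 3 ≤ b) (hc : 3 ≤ c)
    (p : ℕ) [Fact p.Prime] (hodd : Odd p)
    (haniso : ∀ X Y Z : ℚ_[p],
      ((a - 2 : ℤ) : ℚ_[p]) * X ^ 2 + ((b - 2 : ℤ) : ℚ_[p]) * Y ^ 2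
        + ((c - 2 : ℤ) : ℚ_[p]) * Z ^ 2 = 0 → X = 0 ∧ Y = 0 ∧ Z = 0) :
    ∀ δ : ℕ, δ = (if 2 ∣ a ∧ 2 ∣ b ∧ 2 ∣ c then 2 else 0) →
    ∀ v : ℤ, v = ((a - 4) ^ 2 * (b - 2) * (c - 2) + (a - 2) * (b - 4) ^ 2 * (c - 2)
      + (a - 2) * (b - 2) * (c - 4) ^ 2) / 2 ^ δ →
    ∃ C : ℕ, ∀ n : ℕ,
      padicValInt p (2 ^ (3 - δ) * ((a - 2) * (b - 2) * (c - 2)) * (n : ℤ) + v) ≤ C := by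
  intro δ hδ v hv
  have hodd' : Odd p := hodd
  have hα : (a - 2 : ℤ) ≠ 0 := by omega
  have hβ : (b - 2 : ℤ) ≠ 0 := by omega
  have hγ : (c - 2 : ℤ) ≠ 0 := by omega
  set e1 := padicValInt p (a - 2) with he1
  set e2 := padicValInt p (b - 2) with he2
  set e3 := padicValInt p (c - 2) with he3
  have hkey : ¬ (p : ℤ) ^ (e1 + e2 + e3)
      ∣ ((a - 2) * (b - 2) + (b - 2) * (c - 2) + (c - 2) * (a - 2)) :=
    my_key hodd' (a - 2) (b - 2) (c - 2) hα hβ hγ haniso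
  set w : ℤ := (a - 4) ^ 2 * (b - 2) * (c - 2) + (a - 2) * (b - 4) ^ 2 * (c - 2)
    + (a - 2) * (b - 2) * (c - 4) ^ 2 with hwd
  have hprime : Prime (p : ℤ) := Nat.prime_iff_prime_int.mp (Fact.out)
  have hp3 : 3 ≤ p := by
    rcases hodd with ⟨k, hk⟩
    have := (Fact.out : p.Prime).two_le
    omega
  have hnot2 : ¬ (p : ℤ) ∣ 2 := by
    intro h
    have : (p : ℤ) ≤ 2 := Int.le_of_dvd (by norm_num) h
    omega
  have hnot4 : ¬ (p : ℤ) ∣ 4 := by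
    intro h
    have : (p : ℤ) ∣ 2 * 2 := by norm_num at h ⊢; exact_mod_cast h
    rcases hprime.dvd_mul.mp this with h' | h' <;> exact hnot2 h'
  have hw2 : w = 2 ^ δ * v := by
    by_cases h2 : 2 ∣ a ∧ 2 ∣ b ∧ 2 ∣ c
    · rw [if_pos h2] at hδ
      subst hδ
      obtain ⟨⟨a1, ha1⟩, ⟨b1, hb1⟩, ⟨c1, hc1⟩⟩ := h2
      have hw4 : w = 4 * ((a1 - 2) ^ 2 * (b - 2) * (c - 2) + (a - 2) * (b1 - 2) ^ 2 * (c - 2)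
          + (a - 2) * (b - 2) * (c1 - 2) ^ 2) := by
        rw [hwd, ha1, hb1, hc1]; ring
      rw [hv, hw4]
      rw [show (2 : ℤ) ^ 2 = 4 by norm_num]
      rw [Int.mul_ediv_cancel_left _ (by norm_num : (4:ℤ) ≠ 0)]
    · rw [if_neg h2] at hδ
      subst hδ
      rw [hv]
      simp
  have hdp : (p : ℤ) ^ (e1 + e2 + e3) ∣ (a - 2) * (b - 2) * (c - 2) := by
    rw [pow_add, pow_add]
    exact mul_dvd_mul (mul_dvd_mul (padicValInt_dvd _) (padicValInt_dvd _)) (padicValInt_dvd _)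
  have hnw : ¬ (p : ℤ) ^ (e1 + e2 + e3) ∣ w := by
    intro h
    have hident : (4 : ℤ) * ((a - 2) * (b - 2) + (b - 2) * (c - 2) + (c - 2) * (a - 2))
        = w - (a - 2) * (b - 2) * (c - 2) * ((a - 2) + (b - 2) + (c - 2) - 12) := by
      rw [hwd]; ring
    have h4s : (p : ℤ) ^ (e1 + e2 + e3)
        ∣ 4 * ((a - 2) * (b - 2) + (b - 2) * (c - 2) + (c - 2) * (a - 2)) := by
      rw [hident]
      exact dvd_sub h (hdp.mul_right _)
    exact hkey (hprime.pow_dvd_of_dvd_mul_left _ hnot4 h4s)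
  have hnv : ¬ (p : ℤ) ^ (e1 + e2 + e3) ∣ v := by
    intro h
    exact hnw (hw2 ▸ h.mul_left (2 ^ δ))
  have hv0 : v ≠ 0 := by
    intro h
    exact hnv (h ▸ dvd_zero _)
  set vv := padicValInt p v with hvvd
  have hvv : vv < e1 + e2 + e3 := by
    by_contra hcon
    push_neg at hcon
    exact hnv ((pow_dvd_pow _ hcon).trans (padicValInt_dvd v))
  refine ⟨vv, fun n => ?_⟩
  have hdAn : (p : ℤ) ^ (vv + 1) ∣ 2 ^ (3 - δ) * ((a - 2) * (b - 2) * (c - 2)) * (n : ℤ) := by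
    have h1 : (p : ℤ) ^ (vv + 1) ∣ (a - 2) * (b - 2) * (c - 2) :=
      (pow_dvd_pow _ (by omega)).trans hdp
    exact (h1.mul_left _).mul_right _
  have hndv : ¬ (p : ℤ) ^ (vv + 1) ∣ v := by
    intro h
    rcases (padicValInt_dvd_iff _ _).mp h with h' | h'
    · exact hv0 h'
    · rw [← hvvd] at h'; omega
  have hnsum : ¬ (p : ℤ) ^ (vv + 1)
      ∣ (2 ^ (3 - δ) * ((a - 2) * (b - 2) * (c - 2)) * (n : ℤ) + v) := by
    intro h
    have := dvd_sub h hdAn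
    exact hndv (by simpa using this)
  by_contra hcon
  push_neg at hcon
  exact hnsum ((pow_dvd_pow _ hcon).trans (padicValInt_dvd _))
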